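/- Codes give perfect MMES: let C ⊆ (ZMod d)^n be a set of codewords with |C| = d^{⌊n/2⌋} whose pairwise Hamming distance satisfies d_H(v,w) ≥ ⌈n/2⌉ + 1 for all distinct v, w ∈ C. Define the pure state z by z_k = 1/√|C| if k ∈ C and z_k = 0 otherwise. Then for every subset A ⊆ {1,…,n} with |A| = ⌊n/2⌋ the purity is minimal, π_A(z) = 1/d^{⌊n/2⌋}; hence z is a perfect multipartite maximally entangled state and π_ME(z) = 1/d^{⌊n/2⌋}. -/

import Mathlib

open scoped BigOperators Classical ComplexOrder
open Finset MeasureTheory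

noncomputable section

/-- Indicator (Kronecker delta) that two strings `k, l ∈ (ZMod d)^n` agree on all
positions in `A` (i.e. `k_A = l_A`). -/
def agree {d n : ℕ} (A : Finset (Fin n)) (k l : Fin n → ZMod d) : ℝ :=
  if ∀ j ∈ A, k j = l j then 1 else 0

/-- Purity of a state `z` with respect to the bipartition `(A, Aᶜ)`:
`π_A(z) = ∑ z_k z_{k'} conj(z_l) conj(z_{l'}) [k'_A = l_A][k_A = l'_A][k_Ā = l_Ā][k'_Ā = l'_Ā]`. -/
def purity {d n : ℕ} [NeZero d] (A : Finset (Fin n)) (z : (Fin n → ZMod d) → ℂ) : ℂ :=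
  ∑ k, ∑ k', ∑ l, ∑ l',
    z k * z k' * (starRingEnd ℂ) (z l) * (starRingEnd ℂ) (z l') *
      (agree A k' l : ℂ) * (agree A k l' : ℂ) * (agree Aᶜ k l : ℂ) * (agree Aᶜ k' l' : ℂ)

/-- The potential of multipartite entanglement: the average of the purities over all
balanced bipartitions (`|A| = ⌊n/2⌋`). -/
def piME {d n : ℕ} [NeZero d] (z : (Fin n → ZMod d) → ℂ) : ℂ :=
  ((n.choose (n / 2) : ℂ))⁻¹ *
    ∑ A ∈ (Finset.univ : Finset (Fin n)).powersetCard (n / 2), purity A z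

/-- A pure state of `n` qudits: a normalized vector of Fourier coefficients. -/
def IsPureState {d n : ℕ} [NeZero d] (z : (Fin n → ZMod d) → ℂ) : Prop :=
  ∑ k, ‖z k‖ ^ 2 = 1

lemma codeword_eq {d n : ℕ} {C : Finset (Fin n → ZMod d)}
    (hdist : ∀ v ∈ C, ∀ w ∈ C, v ≠ w → (n + 1) / 2 + 1 ≤ hammingDist v w)
    {k l : Fin n → ZMod d} (hk : k ∈ C) (hl : l ∈ C)
    {S : Finset (Fin n)} (hS : n / 2 ≤ S.card) (h : ∀ j ∈ S, k j = l j) : k = l := by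
  by_contra hne
  have h1 := hdist k hk l hl hne
  have h2 : hammingDist k l ≤ n - S.card := by
    have hsub : (univ.filter fun i => k i ≠ l i) ⊆ Sᶜ := by
      intro i hi
      simp only [mem_filter, mem_univ, true_and] at hi
      simp only [mem_compl]
      exact fun hiS => hi (h i hiS)
    calc hammingDist k l ≤ Sᶜ.card := Finset.card_le_card hsub
    _ = n - S.card := by rw [Finset.card_compl]; simp
  have h3 : S.card ≤ n := le_trans (Finset.card_le_univ S) (by simp)
  omega

lemma fiber_card {d n : ℕ} [NeZero d] {C : Finset (Fin n → ZMod d)}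
    (hcard : C.card = d ^ (n / 2))
    (hdist : ∀ v ∈ C, ∀ w ∈ C, v ≠ w → (n + 1) / 2 + 1 ≤ hammingDist v w)
    {A : Finset (Fin n)} (hA : A.card ≤ n / 2) (k : Fin n → ZMod d) :
    (C.filter fun k' => ∀ j ∈ A, k j = k' j).card = d ^ (n / 2 - A.card) := by
  have hn2 : n / 2 ≤ (Finset.univ : Finset (Fin n)).card := by simp; omega
  obtain ⟨B, hAB, -, hBcard⟩ :=
    Finset.exists_subsuperset_card_eq (Finset.subset_univ A) hA hn2
  set F : {x // x ∈ C} → (↥B → ZMod d) := fun x j => x.1 j.1 with hF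
  have hFinj : Function.Injective F := by
    intro x y hxy
    apply Subtype.ext
    refine codeword_eq hdist x.2 y.2 (S := B) (le_of_eq hBcard.symm) ?_
    intro j hj
    exact congrFun hxy ⟨j, hj⟩
  have hcardeq : Fintype.card {x // x ∈ C} = Fintype.card (↥B → ZMod d) := by
    rw [Fintype.card_coe, hcard, Fintype.card_fun, Fintype.card_coe, ZMod.card, hBcard]
  have hFbij : Function.Bijective F :=
    (Fintype.bijective_iff_injective_and_card F).mpr ⟨hFinj, hcardeq⟩
  have e1 : {g : ↥B → ZMod d // ∀ j : ↥B, (j : Fin n) ∈ A → g j = k j.1} ≃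
      (↥(B \ A) → ZMod d) :=
    { toFun := fun g j => g.1 ⟨j.1, (Finset.mem_sdiff.mp j.2).1⟩
      invFun := fun h => ⟨fun j => if hj : (j : Fin n) ∈ A then k j.1
        else h ⟨j.1, Finset.mem_sdiff.mpr ⟨j.2, hj⟩⟩, by intro j hj; simp [hj]⟩
      left_inv := by
        intro g
        apply Subtype.ext
        funext j
        by_cases hj : (j : Fin n) ∈ A
        · simp [hj, (g.2 j hj).symm]
        · simp [hj]
      right_inv := by
        intro h
        funext j
        have hj : ¬ (j : Fin n) ∈ A := (Finset.mem_sdiff.mp j.2).2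
        simp [hj] }
  set S := C.filter fun k' => ∀ j ∈ A, k j = k' j with hS
  have hφbij : Function.Bijective (fun x : {x // x ∈ S} =>
      (⟨fun j => x.1 j.1, fun j hj => ((Finset.mem_filter.mp x.2).2 j hj).symm⟩ :
        {g : ↥B → ZMod d // ∀ j : ↥B, (j : Fin n) ∈ A → g j = k j.1})) := by
    constructor
    · intro x y hxy
      apply Subtype.ext
      refine codeword_eq hdist (Finset.mem_filter.mp x.2).1 (Finset.mem_filter.mp y.2).1
        (S := B) (le_of_eq hBcard.symm) ?_
      intro j hj
      have := congrFun (congrArg Subtype.val hxy) ⟨j, hj⟩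
      simpa using this
    · rintro ⟨g, hg⟩
      obtain ⟨x, hx⟩ := hFbij.2 g
      have hxS : x.1 ∈ S := by
        rw [hS, Finset.mem_filter]
        refine ⟨x.2, fun j hj => ?_⟩
        have h5 : x.1 j = g ⟨j, hAB hj⟩ := congrFun hx ⟨j, hAB hj⟩
        exact (h5.trans (hg ⟨j, hAB hj⟩ hj)).symm
      refine ⟨⟨x.1, hxS⟩, ?_⟩
      apply Subtype.ext
      funext j
      exact congrFun hx j
  have := Fintype.card_of_bijective hφbij
  rw [Fintype.card_coe] at this
  rw [this, Fintype.card_congr e1, Fintype.card_fun, Fintype.card_coe, ZMod.card,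
    Finset.card_sdiff_of_subset hAB, hBcard]

lemma purity_eq {d n : ℕ} [NeZero d] {C : Finset (Fin n → ZMod d)}
    (hcard : C.card = d ^ (n / 2))
    (hdist : ∀ v ∈ C, ∀ w ∈ C, v ≠ w → (n + 1) / 2 + 1 ≤ hammingDist v w)
    (z : (Fin n → ZMod d) → ℂ)
    (hzdef : z = fun k => if k ∈ C then ((1 / Real.sqrt (C.card : ℝ) : ℝ) : ℂ) else 0)
    {A : Finset (Fin n)} (hA : A.card ≤ n - A.card) :
    purity A z = 1 / (d : ℂ) ^ A.card := by
  have hdpos : 0 < d := Nat.pos_of_ne_zero (NeZero.ne d)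
  have hAn : A.card ≤ n := le_trans (Finset.card_le_univ A) (by simp)
  have hA2 : A.card ≤ n / 2 := by omega
  have hAc : n / 2 ≤ Aᶜ.card := by
    rw [Finset.card_compl, Fintype.card_fin]; omega
  set c : ℝ := 1 / Real.sqrt (C.card : ℝ) with hc
  have hterm : ∀ k k' l l' : Fin n → ZMod d,
      z k * z k' * (starRingEnd ℂ) (z l) * (starRingEnd ℂ) (z l') *
        (agree A k' l : ℂ) * (agree A k l' : ℂ) * (agree Aᶜ k l : ℂ) * (agree Aᶜ k' l' : ℂ)
      = if l' = k' ∧ l = k ∧ k ∈ C ∧ k' ∈ C ∧ (∀ j ∈ A, k j = k' j)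
        then ((c : ℂ)) ^ 4 else 0 := by
    intro k k' l l'
    set Q : Prop := l' = k' ∧ l = k ∧ k ∈ C ∧ k' ∈ C ∧ (∀ j ∈ A, k j = k' j) with hQ
    by_cases hk : k ∈ C
    · by_cases hk' : k' ∈ C
      · by_cases hl : l ∈ C
        · by_cases hl' : l' ∈ C
          · by_cases h1 : ∀ j ∈ Aᶜ, k j = l j
            · by_cases h2 : ∀ j ∈ Aᶜ, k' j = l' j
              · have hlk : l = k := (codeword_eq hdist hk hl hAc h1).symm
                have hl'k' : l' = k' := (codeword_eq hdist hk' hl' hAc h2).symm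
                subst hlk; subst hl'k'
                by_cases h3 : ∀ j ∈ A, l j = l' j
                · have h4 : ∀ j ∈ A, l' j = l j := fun j hj => (h3 j hj).symm
                  have hQt : Q := ⟨rfl, rfl, hk, hk', h3⟩
                  rw [if_pos hQt]
                  simp only [hzdef, if_pos hk, if_pos hk', agree, if_pos h3, if_pos h4]
                  simp [Complex.conj_ofReal]
                  ring
                · have hQf : ¬ Q := by rintro ⟨-, -, -, -, h⟩; exact h3 h
                  rw [if_neg hQf]
                  simp only [hzdef, agree, if_neg h3]
                  simp
              · have hQf : ¬ Q := by rintro ⟨rfl, -, -, -, -⟩; exact h2 fun j _ => rfl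
                rw [if_neg hQf]
                simp only [agree, if_neg h2]
                simp
            · have hQf : ¬ Q := by rintro ⟨-, rfl, -, -, -⟩; exact h1 fun j _ => rfl
              rw [if_neg hQf]
              simp only [agree, if_neg h1]
              simp
          · have hQf : ¬ Q := by rintro ⟨rfl, -, -, h, -⟩; exact hl' h
            rw [if_neg hQf]
            simp [hzdef, hl']
        · have hQf : ¬ Q := by rintro ⟨-, rfl, h, -, -⟩; exact hl h
          rw [if_neg hQf]
          simp [hzdef, hl]
      · have hQf : ¬ Q := by rintro ⟨-, -, -, h, -⟩; exact hk' h
        rw [if_neg hQf]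
        simp [hzdef, hk']
    · have hQf : ¬ Q := by rintro ⟨-, -, h, -, -⟩; exact hk h
      rw [if_neg hQf]
      simp [hzdef, hk]
  have e2 : ∀ k : Fin n → ZMod d, ∑ k' : Fin n → ZMod d,
      (if k ∈ C then (if k' ∈ C then
        (if (∀ j ∈ A, k j = k' j) then ((c : ℂ)) ^ 4 else 0) else 0) else 0)
      = if k ∈ C then (∑ k' ∈ C, if (∀ j ∈ A, k j = k' j) then ((c : ℂ)) ^ 4 else 0)
        else 0 := by
    intro k
    by_cases hk : k ∈ C
    · simp only [if_pos hk]
      rw [Finset.sum_ite_mem, Finset.univ_inter]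
    · simp [hk]
  have h5 : purity A z = ∑ k ∈ C, ∑ k' ∈ C,
      (if (∀ j ∈ A, k j = k' j) then ((c : ℂ)) ^ 4 else 0) := by
    rw [purity]
    simp only [hterm, ite_and, Finset.sum_ite_eq', Finset.mem_univ, if_true]
    simp only [e2]
    rw [Finset.sum_ite_mem, Finset.univ_inter]
  have h6 : ∀ k ∈ C, (∑ k' ∈ C, if (∀ j ∈ A, k j = k' j) then ((c : ℂ)) ^ 4 else 0)
      = ((d : ℂ) ^ (n / 2 - A.card)) * ((c : ℂ)) ^ 4 := by
    intro k hk
    rw [← Finset.sum_filter, Finset.sum_const, fiber_card hcard hdist hA2 k,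
      nsmul_eq_mul]
    push_cast
    ring
  rw [h5, Finset.sum_congr rfl h6, Finset.sum_const, nsmul_eq_mul, hcard]
  have hCpos : (0 : ℝ) < (C.card : ℝ) := by
    rw [hcard]; positivity
  have hc4 : ((c : ℂ)) ^ 4 = 1 / (((C.card : ℝ) : ℂ)) ^ 2 := by
    have h7 : (c : ℝ) ^ 2 = 1 / (C.card : ℝ) := by
      rw [hc, div_pow, one_pow, Real.sq_sqrt hCpos.le]
    calc ((c : ℂ)) ^ 4 = (((c ^ 2 : ℝ) : ℂ)) ^ 2 := by push_cast; ring
    _ = 1 / (((C.card : ℝ) : ℂ)) ^ 2 := by rw [h7]; push_cast; ring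
  rw [hc4]
  have hd0 : (d : ℂ) ≠ 0 := by
    exact_mod_cast Nat.cast_ne_zero.mpr (NeZero.ne d)
  have hcast : (((C.card : ℝ)) : ℂ) = (d : ℂ) ^ (n / 2) := by
    rw [hcard]; push_cast; ring
  rw [hcast]
  have hsplit : n / 2 = A.card + (n / 2 - A.card) := by omega
  rw [hsplit, pow_add]
  push_cast
  field_simp
  generalize n / 2 - A.card = m
  rw [Nat.add_sub_cancel_left]
  ring

/-- Codes give perfect MMES. If `C ⊆ (ZMod d)^n` has `|C| = d^{⌊n/2⌋}`
codewords with pairwise Hamming distance at least `⌈n/2⌉ + 1`, then the uniform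
superposition over `C` has minimal purity `1/d^{⌊n/2⌋}` for every balanced bipartition;
hence it is a perfect MMES and `π_ME = 1/d^{⌊n/2⌋}`. -/
theorem code_perfect_mmes (d n : ℕ) [NeZero d] (hd : 2 ≤ d) (hn : 1 ≤ n)
    (C : Finset (Fin n → ZMod d)) (hcard : C.card = d ^ (n / 2))
    (hdist : ∀ v ∈ C, ∀ w ∈ C, v ≠ w → (n + 1) / 2 + 1 ≤ hammingDist v w)
    (z : (Fin n → ZMod d) → ℂ)
    (hzdef : z = fun k => if k ∈ C then ((1 / Real.sqrt (C.card : ℝ) : ℝ) : ℂ) else 0) :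
    (∀ A : Finset (Fin n), A.card = n / 2 → purity A z = 1 / (d : ℂ) ^ (n / 2)) ∧
      (∀ A : Finset (Fin n), A.card ≤ n - A.card → purity A z = 1 / (d : ℂ) ^ A.card) ∧
      piME z = 1 / (d : ℂ) ^ (n / 2) := by
  have hmain : ∀ A : Finset (Fin n), A.card ≤ n - A.card →
      purity A z = 1 / (d : ℂ) ^ A.card :=
    fun A hA => purity_eq hcard hdist z hzdef hA
  have hbal : ∀ A : Finset (Fin n), A.card = n / 2 →
      purity A z = 1 / (d : ℂ) ^ (n / 2) := by
    intro A hA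
    have h := hmain A (by omega)
    rw [h, hA]
  refine ⟨hbal, hmain, ?_⟩
  rw [piME]
  have hsum : ∑ A ∈ (Finset.univ : Finset (Fin n)).powersetCard (n / 2), purity A z
      = (n.choose (n / 2) : ℂ) * (1 / (d : ℂ) ^ (n / 2)) := by
    rw [Finset.sum_congr rfl fun A hA => hbal A (Finset.mem_powersetCard_univ.mp hA),
      Finset.sum_const, Finset.card_powersetCard, Finset.card_univ, Fintype.card_fin,
      nsmul_eq_mul]
  rw [hsum, ← mul_assoc, inv_mul_cancel₀, one_mul]
  exact_mod_cast Nat.cast_ne_zero.mpr (Nat.choose_pos (by omega : n / 2 ≤ n)).ne'
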